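/- (Order of the coefficient ideal.) Let k be a field of characteristic zero, I a nonzero ideal of R = k[x_1,…,x_n], and p ∈ k^n a point with ord_p(I) = a ≥ 1. Then the coefficient ideal satisfies ord_p(C(I,a)) = a!. -/

import Mathlib

open MvPolynomial

/-- The derivative ideal: the ideal generated by `I` together with all first partial
derivatives of its elements. -/
noncomputable def derivIdeal {k : Type*} [CommSemiring k] {σ : Type*}
    (I : Ideal (MvPolynomial σ k)) : Ideal (MvPolynomial σ k) :=
  I ⊔ Ideal.span {g | ∃ f ∈ I, ∃ i : σ, g = pderiv i f}

/-- The order of a nonzero polynomial at a point `p`: the smallest total degree of a monomial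
appearing in the shifted polynomial `f(x+p)`. -/
noncomputable def polyOrdAt {k : Type*} [CommSemiring k] {σ : Type*} (p : σ → k)
    (f : MvPolynomial σ k) : ℕ :=
  sInf {m | ∃ d ∈ (aeval (fun i => X i + C (p i)) f : MvPolynomial σ k).support,
    (d.sum fun _ e => e) = m}

/-- The order of a nonzero ideal at a point: `min {ord_p f : 0 ≠ f ∈ I}`. -/
noncomputable def idealOrdAt {k : Type*} [CommSemiring k] {σ : Type*} (p : σ → k)
    (I : Ideal (MvPolynomial σ k)) : ℕ :=
  sInf {m | ∃ f ∈ I, f ≠ 0 ∧ polyOrdAt p f = m}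

/-- The coefficient ideal `C(I,a) = Σ D^{a-1}(I)^{b₁} ⋯ D⁰(I)^{b_a}`, the sum running over
all tuples `(b₁,…,b_a)` of nonnegative integers with `Σ i·b_i ≥ a!`. -/
noncomputable def coeffIdeal {k : Type*} [CommSemiring k] {σ : Type*}
    (I : Ideal (MvPolynomial σ k)) (a : ℕ) : Ideal (MvPolynomial σ k) :=
  ⨆ b : {b : Fin a → ℕ // Nat.factorial a ≤ ∑ i, (i.1 + 1) * b i},
    ∏ i : Fin a, (derivIdeal^[a - (i.1 + 1)] I) ^ (b.1 i)



namespace CIP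

variable {k : Type*} [Field k] {n : ℕ}

/-- degree of an exponent vector -/
def deg (d : Fin n →₀ ℕ) : ℕ := d.sum fun _ e => e

lemma deg_add (u v : Fin n →₀ ℕ) : deg (u + v) = deg u + deg v :=
  Finsupp.sum_add_index' (fun _ => rfl) (fun _ _ _ => rfl)

lemma deg_single (i : Fin n) : deg (Finsupp.single i 1) = 1 := by
  simp [deg]

lemma deg_eq_degree (d : Fin n →₀ ℕ) : deg d = Finsupp.degree d := rfl

/-- "order ≥ c" predicate on polynomials -/
def ordGe (c : ℕ) (f : MvPolynomial (Fin n) k) : Prop := ∀ d ∈ f.support, c ≤ deg d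

lemma ordGe_zero (c : ℕ) : ordGe c (0 : MvPolynomial (Fin n) k) := by
  intro d hd; simp at hd

lemma ordGe_mono {c c' : ℕ} (h : c' ≤ c) {f : MvPolynomial (Fin n) k} (hf : ordGe c f) :
    ordGe c' f := fun d hd => le_trans h (hf d hd)

lemma ordGe_add {c : ℕ} {f g : MvPolynomial (Fin n) k} (hf : ordGe c f) (hg : ordGe c g) :
    ordGe c (f + g) := by
  intro d hd
  rcases Finset.mem_union.1 (MvPolynomial.support_add hd) with h | h
  · exact hf d h
  · exact hg d h

lemma ordGe_mul {c c' : ℕ} {f g : MvPolynomial (Fin n) k} (hf : ordGe c f) (hg : ordGe c' g) :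
    ordGe (c + c') (f * g) := by
  intro d hd
  rw [MvPolynomial.mem_support_iff, MvPolynomial.coeff_mul] at hd
  obtain ⟨x, hx, hne⟩ := Finset.exists_ne_zero_of_sum_ne_zero hd
  rw [Finset.HasAntidiagonal.mem_antidiagonal] at hx
  have h1 : x.1 ∈ f.support := MvPolynomial.mem_support_iff.2 (left_ne_zero_of_mul hne)
  have h2 : x.2 ∈ g.support := MvPolynomial.mem_support_iff.2 (right_ne_zero_of_mul hne)
  calc c + c' ≤ deg x.1 + deg x.2 := add_le_add (hf _ h1) (hg _ h2)
    _ = deg d := by rw [← deg_add, hx]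

lemma ordGe_pow {c : ℕ} {f : MvPolynomial (Fin n) k} (hf : ordGe c f) (N : ℕ) :
    ordGe (N * c) (f ^ N) := by
  induction N with
  | zero => intro d hd; simp
  | succ N ih =>
    rw [pow_succ, Nat.succ_mul]
    exact ordGe_mul ih hf

lemma coeff_pderiv (i : Fin n) (f : MvPolynomial (Fin n) k) (m : Fin n →₀ ℕ) :
    coeff m (pderiv i f) = ((m i : k) + 1) * coeff (m + Finsupp.single i 1) f := by
  induction f using MvPolynomial.induction_on' with
  | add f g hf hg => simp [hf, hg, mul_add]
  | monomial d c =>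
    rw [pderiv_monomial, coeff_monomial, coeff_monomial]
    by_cases h : d = m + Finsupp.single i 1
    · subst h
      rw [if_pos (add_tsub_cancel_right m (Finsupp.single i 1))]
      simp only [Finsupp.add_apply, Finsupp.single_eq_same]
      push_cast
      ring
    · rw [if_neg h, mul_zero]
      by_cases hdi : d i = 0
      · by_cases h2 : d - Finsupp.single i 1 = m
        · rw [if_pos h2, hdi]; simp
        · rw [if_neg h2]
      · have hle : Finsupp.single i 1 ≤ d := by
          rw [Finsupp.single_le_iff]; omega
        have h2 : d - Finsupp.single i 1 ≠ m := by
          intro hm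
          apply h
          rw [← hm, tsub_add_cancel_of_le hle]
        rw [if_neg h2]

lemma mem_support_pderiv_iff [CharZero k] {i : Fin n} {f : MvPolynomial (Fin n) k}
    {m : Fin n →₀ ℕ} :
    m ∈ (pderiv i f).support ↔ m + Finsupp.single i 1 ∈ f.support := by
  rw [MvPolynomial.mem_support_iff, MvPolynomial.mem_support_iff, coeff_pderiv, mul_ne_zero_iff]
  constructor
  · exact fun h => h.2
  · intro h
    refine ⟨?_, h⟩
    have : ((m i : k) + 1) = ((m i + 1 : ℕ) : k) := by push_cast; ring
    rw [this]
    exact Nat.cast_ne_zero.2 (Nat.succ_ne_zero _)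

lemma ordGe_pderiv [CharZero k] {c : ℕ} {i : Fin n} {f : MvPolynomial (Fin n) k}
    (hf : ordGe c f) : ordGe (c - 1) (pderiv i f) := by
  intro d hd
  rw [mem_support_pderiv_iff] at hd
  have := hf _ hd
  rw [deg_add, deg_single] at this
  omega

/-- one derivative strictly drops the order when positive, in char zero -/
lemma exists_pderiv_support [CharZero k] {f : MvPolynomial (Fin n) k} {d : Fin n →₀ ℕ}
    (hd : d ∈ f.support) (hpos : 1 ≤ deg d) :
    ∃ i : Fin n, d - Finsupp.single i 1 ∈ (pderiv i f).support ∧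
      deg (d - Finsupp.single i 1) + 1 = deg d := by
  have : d ≠ 0 := by
    intro h; rw [h] at hpos; simp [deg] at hpos
  obtain ⟨i, hi⟩ := Finsupp.ne_iff.1 this
  rw [Finsupp.coe_zero, Pi.zero_apply] at hi
  have hle : Finsupp.single i 1 ≤ d := by rw [Finsupp.single_le_iff]; omega
  have hco : (d - Finsupp.single i 1) + Finsupp.single i 1 = d := tsub_add_cancel_of_le hle
  refine ⟨i, ?_, ?_⟩
  · rw [mem_support_pderiv_iff, hco]; exact hd
  · conv_rhs => rw [← hco]
    rw [deg_add, deg_single]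

variable (p : Fin n → k)

/-- The translation map `f(x) ↦ f(x+p)`. -/
noncomputable def Tp : MvPolynomial (Fin n) k →ₐ[k] MvPolynomial (Fin n) k :=
  aeval fun i => X i + C (p i)

lemma Tp_comp_eq_id :
    (aeval (fun i => X i - C (p i)) : MvPolynomial (Fin n) k →ₐ[k] _).comp (Tp p) =
      AlgHom.id k (MvPolynomial (Fin n) k) := by
  apply MvPolynomial.algHom_ext
  intro i
  simp [Tp, sub_add_cancel]

lemma Tp_injective : Function.Injective (Tp p) := by
  intro f g h
  have := congrArg (aeval (fun i => X i - C (p i))) h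
  have h1 := AlgHom.congr_fun (Tp_comp_eq_id p) f
  have h2 := AlgHom.congr_fun (Tp_comp_eq_id p) g
  simp only [AlgHom.coe_comp, Function.comp_apply, AlgHom.coe_id, id_eq] at h1 h2
  rw [h1] at this; rw [h2] at this; exact this

lemma Tp_ne_zero {f : MvPolynomial (Fin n) k} (hf : f ≠ 0) : Tp p f ≠ 0 := by
  intro h
  exact hf (Tp_injective p (by rw [h, map_zero]))

lemma Tp_pderiv (i : Fin n) (f : MvPolynomial (Fin n) k) :
    pderiv i (Tp p f) = Tp p (pderiv i f) := by
  induction f using MvPolynomial.induction_on with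
  | C c => simp [Tp]
  | add f g hf hg => simp [map_add, hf, hg]
  | mul_X f j hf =>
    simp only [map_mul, pderiv_mul, hf, map_add]
    have hX : Tp p (X j) = X j + C (p j) := by simp [Tp]
    rw [hX]
    have : pderiv i (X j + C (p j)) = ((pderiv i (X j) : MvPolynomial (Fin n) k)) := by
      simp
    rw [this]
    rcases eq_or_ne i j with h | h
    · subst h; simp [pderiv_X_self]
    · simp [pderiv_X_of_ne h.symm]

lemma polyOrdAt_def (f : MvPolynomial (Fin n) k) :
    polyOrdAt p f = sInf {m | ∃ d ∈ (Tp p f).support, deg d = m} := rfl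

lemma polyOrdAt_le {f : MvPolynomial (Fin n) k} {d : Fin n →₀ ℕ}
    (hd : d ∈ (Tp p f).support) : polyOrdAt p f ≤ deg d :=
  Nat.sInf_le ⟨d, hd, rfl⟩

lemma le_polyOrdAt {f : MvPolynomial (Fin n) k} {c : ℕ}
    (hf : Tp p f ≠ 0) (h : ordGe c (Tp p f)) : c ≤ polyOrdAt p f := by
  rw [polyOrdAt_def]
  apply le_csInf
  · obtain ⟨d, hd⟩ := (MvPolynomial.support_nonempty).2 hf
    exact ⟨deg d, d, hd, rfl⟩
  · rintro m ⟨d, hd, rfl⟩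
    exact h d hd

lemma exists_deg_eq_polyOrdAt {f : MvPolynomial (Fin n) k} (hf : Tp p f ≠ 0) :
    ∃ d ∈ (Tp p f).support, deg d = polyOrdAt p f := by
  have hne : {m | ∃ d ∈ (Tp p f).support, deg d = m}.Nonempty := by
    obtain ⟨d, hd⟩ := (MvPolynomial.support_nonempty).2 hf
    exact ⟨deg d, d, hd, rfl⟩
  have := Nat.sInf_mem hne
  rw [← polyOrdAt_def] at this
  exact this

lemma ordGe_of_le_polyOrdAt {f : MvPolynomial (Fin n) k} {c : ℕ}
    (h : c ≤ polyOrdAt p f) : ordGe c (Tp p f) :=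
  fun d hd => le_trans h (polyOrdAt_le p hd)

/-- "order at p ≥ c" for ideals -/
def IOrdGe (c : ℕ) (J : Ideal (MvPolynomial (Fin n) k)) : Prop :=
  ∀ f ∈ J, ordGe c (Tp p f)

lemma IOrdGe_mono {c c' : ℕ} (h : c' ≤ c) {J : Ideal (MvPolynomial (Fin n) k)}
    (hJ : IOrdGe p c J) : IOrdGe p c' J := fun f hf => ordGe_mono h (hJ f hf)

lemma IOrdGe_top : IOrdGe p 0 (⊤ : Ideal (MvPolynomial (Fin n) k)) :=
  fun f _ => fun d _ => Nat.zero_le _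

lemma IOrdGe_mul {c c' : ℕ} {J K : Ideal (MvPolynomial (Fin n) k)}
    (hJ : IOrdGe p c J) (hK : IOrdGe p c' K) : IOrdGe p (c + c') (J * K) := by
  intro f hf
  refine Submodule.mul_induction_on hf ?_ ?_
  · intro x hx y hy
    rw [map_mul]
    exact ordGe_mul (hJ x hx) (hK y hy)
  · intro x y hx hy
    rw [map_add]
    exact ordGe_add hx hy

lemma IOrdGe_pow {c : ℕ} {J : Ideal (MvPolynomial (Fin n) k)}
    (hJ : IOrdGe p c J) (N : ℕ) : IOrdGe p (N * c) (J ^ N) := by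
  induction N with
  | zero => rw [pow_zero, Nat.zero_mul, Ideal.one_eq_top]; exact IOrdGe_top p
  | succ N ih =>
    rw [pow_succ, Nat.succ_mul]
    exact IOrdGe_mul p ih hJ

lemma IOrdGe_prod {ι : Type*} (s : Finset ι) (J : ι → Ideal (MvPolynomial (Fin n) k))
    (c : ι → ℕ) (h : ∀ i ∈ s, IOrdGe p (c i) (J i)) :
    IOrdGe p (∑ i ∈ s, c i) (∏ i ∈ s, J i) := by
  classical
  induction s using Finset.induction_on with
  | empty => simpa using IOrdGe_top p
  | insert x s hx ih =>
    rw [Finset.prod_insert hx, Finset.sum_insert hx]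
    exact IOrdGe_mul p (h x (Finset.mem_insert_self x s))
      (ih fun i hi => h i (Finset.mem_insert_of_mem hi))

lemma IOrdGe_derivIdeal [CharZero k] {c : ℕ} {J : Ideal (MvPolynomial (Fin n) k)}
    (hJ : IOrdGe p c J) : IOrdGe p (c - 1) (derivIdeal J) := by
  intro f hf
  rw [derivIdeal, Submodule.mem_sup] at hf
  obtain ⟨y, hy, z, hz, rfl⟩ := hf
  rw [map_add]
  refine ordGe_add (ordGe_mono (Nat.sub_le c 1) (hJ y hy)) ?_
  refine Submodule.span_induction ?_ ?_ ?_ ?_ hz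
  · rintro g ⟨f₀, hf₀, i, rfl⟩
    rw [← Tp_pderiv]
    exact ordGe_pderiv (hJ f₀ hf₀)
  · rw [map_zero]; exact ordGe_zero _
  · intro x y _ _ hx hy
    rw [map_add]; exact ordGe_add hx hy
  · intro r x _ hx
    rw [smul_eq_mul, map_mul]
    have : c - 1 = 0 + (c - 1) := by omega
    rw [this]
    exact ordGe_mul (fun d _ => Nat.zero_le _) hx

lemma IOrdGe_iterate [CharZero k] {a : ℕ} {J : Ideal (MvPolynomial (Fin n) k)}
    (hJ : IOrdGe p a J) (m : ℕ) : IOrdGe p (a - m) (derivIdeal^[m] J) := by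
  induction m with
  | zero => simpa using hJ
  | succ m ih =>
    rw [Function.iterate_succ_apply']
    have : a - (m + 1) = (a - m) - 1 := by omega
    rw [this]
    exact IOrdGe_derivIdeal p ih

lemma hcomp_mul_of_ordGe {m m' : ℕ} {f g : MvPolynomial (Fin n) k}
    (hf : ordGe m f) (hg : ordGe m' g) :
    homogeneousComponent (m + m') (f * g) =
      homogeneousComponent m f * homogeneousComponent m' g := by
  classical
  ext d
  rw [coeff_homogeneousComponent, MvPolynomial.coeff_mul, MvPolynomial.coeff_mul]
  by_cases hd : Finsupp.degree d = m + m'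
  · rw [if_pos hd]
    refine Finset.sum_congr rfl ?_
    rintro ⟨u, v⟩ huv
    rw [Finset.HasAntidiagonal.mem_antidiagonal] at huv
    simp only
    rw [coeff_homogeneousComponent, coeff_homogeneousComponent]
    have hdeg : deg u + deg v = m + m' := by
      rw [← deg_add, huv, deg_eq_degree, hd]
    by_cases hu : Finsupp.degree u = m
    · have hv : Finsupp.degree v = m' := by
        rw [← deg_eq_degree] at hu ⊢; omega
      rw [if_pos hu, if_pos hv]
    · rw [if_neg hu]
      rcases lt_or_gt_of_ne (fun h => hu (by rw [← deg_eq_degree]; exact h) : deg u ≠ m) with h | h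
      · have : coeff u f = 0 := by
          by_contra hc
          exact absurd (hf u (MvPolynomial.mem_support_iff.2 hc)) (by omega)
        simp [this]
      · have hv : deg v < m' := by omega
        have : coeff v g = 0 := by
          by_contra hc
          exact absurd (hg v (MvPolynomial.mem_support_iff.2 hc)) (by omega)
        simp [this]
  · rw [if_neg hd]
    symm
    refine Finset.sum_eq_zero ?_
    rintro ⟨u, v⟩ huv
    rw [Finset.HasAntidiagonal.mem_antidiagonal] at huv
    simp only
    rw [coeff_homogeneousComponent, coeff_homogeneousComponent]
    by_cases hu : Finsupp.degree u = m
    · by_cases hv : Finsupp.degree v = m'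
      · exfalso
        apply hd
        rw [← huv, ← deg_eq_degree, deg_add, deg_eq_degree, deg_eq_degree, hu, hv]
      · rw [if_neg hv, mul_zero]
    · rw [if_neg hu, zero_mul]

lemma hcomp_pow_of_ordGe {a : ℕ} {h : MvPolynomial (Fin n) k} (hh : ordGe a h) (N : ℕ) :
    homogeneousComponent (N * a) (h ^ N) = (homogeneousComponent a h) ^ N := by
  induction N with
  | zero => simp
  | succ N ih =>
    rw [pow_succ, pow_succ, Nat.succ_mul, hcomp_mul_of_ordGe (ordGe_pow hh N) hh, ih]

lemma exists_deg_pow {h : MvPolynomial (Fin n) k} {a : ℕ}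
    (hne : homogeneousComponent a h ≠ 0) (hord : ordGe a h) (N : ℕ) :
    ∃ d ∈ (h ^ N).support, deg d = N * a := by
  have hpow : homogeneousComponent (N * a) (h ^ N) ≠ 0 := by
    rw [hcomp_pow_of_ordGe hord]
    exact pow_ne_zero N hne
  obtain ⟨d, hd⟩ := MvPolynomial.ne_zero_iff.1 hpow
  rw [coeff_homogeneousComponent] at hd
  by_cases hdd : Finsupp.degree d = N * a
  · rw [if_pos hdd] at hd
    exact ⟨d, MvPolynomial.mem_support_iff.2 hd, by rw [deg_eq_degree, hdd]⟩
  · rw [if_neg hdd] at hd; exact absurd rfl hd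

lemma hcomp_ne_zero_of_min {h : MvPolynomial (Fin n) k} {a : ℕ} {d₀ : Fin n →₀ ℕ}
    (hd₀ : d₀ ∈ h.support) (hdeg : deg d₀ = a) :
    homogeneousComponent a h ≠ 0 := by
  intro hzero
  have := congrArg (coeff d₀) hzero
  rw [coeff_homogeneousComponent, if_pos (by rw [← deg_eq_degree, hdeg])] at this
  exact (MvPolynomial.mem_support_iff.1 hd₀) (by simpa using this)

lemma IOrdGe_coeffIdeal [CharZero k] {a : ℕ} (ha : 1 ≤ a)
    {I : Ideal (MvPolynomial (Fin n) k)} (hI : IOrdGe p a I) :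
    IOrdGe p (Nat.factorial a) (coeffIdeal I a) := by
  intro f hf
  rw [coeffIdeal] at hf
  refine Submodule.iSup_induction (motive := fun x => ordGe (Nat.factorial a) (Tp p x)) _ hf ?_ ?_ ?_
  · rintro ⟨b, hb⟩ x hx
    have key : IOrdGe p (∑ i : Fin a, (i.1 + 1) * b i)
        (∏ i : Fin a, (derivIdeal^[a - (i.1 + 1)] I) ^ (b i)) := by
      apply IOrdGe_prod
      intro i _
      have h1 : IOrdGe p (a - (a - (i.1 + 1))) (derivIdeal^[a - (i.1 + 1)] I) :=
        IOrdGe_iterate p hI _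
      have h2 : a - (a - (i.1 + 1)) = i.1 + 1 := by
        have := i.2; omega
      rw [h2] at h1
      rw [mul_comm]
      exact IOrdGe_pow p h1 (b i)
    exact IOrdGe_mono p hb key x hx
  · show ordGe _ (Tp p 0)
    rw [map_zero]; exact ordGe_zero _
  · intro x y hx hy
    show ordGe _ (Tp p (x + y))
    rw [map_add]; exact ordGe_add hx hy

lemma pow_mem_coeffIdeal {a : ℕ} (ha : 1 ≤ a) {I : Ideal (MvPolynomial (Fin n) k)}
    {f : MvPolynomial (Fin n) k} (hf : f ∈ I) :
    f ^ (a - 1).factorial ∈ coeffIdeal I a := by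
  classical
  set i₀ : Fin a := ⟨a - 1, by omega⟩
  set b : Fin a → ℕ := fun i => if i = i₀ then (a - 1).factorial else 0
  have hsum : ∑ i : Fin a, (i.1 + 1) * b i = Nat.factorial a := by
    rw [Finset.sum_eq_single i₀]
    · simp only [b, if_pos rfl, i₀]
      have : a - 1 + 1 = a := by omega
      rw [this]
      conv_rhs => rw [show a = (a-1) + 1 by omega, Nat.factorial_succ]
      rw [show a - 1 + 1 = a by omega]
    · intro j _ hj
      simp [b, hj]
    · intro hmem
      exact absurd (Finset.mem_univ i₀) hmem
  have hprod : (∏ i : Fin a, (derivIdeal^[a - (i.1 + 1)] I) ^ (b i)) = I ^ (a - 1).factorial := by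
    rw [Finset.prod_eq_single i₀]
    · simp only [b, if_pos rfl, i₀]
      rw [show a - (a - 1 + 1) = 0 by omega]
      rfl
    · intro j _ hj
      simp [b, hj]
    · intro hmem
      exact absurd (Finset.mem_univ i₀) hmem
  have hmem : f ^ (a - 1).factorial ∈ (∏ i : Fin a, (derivIdeal^[a - (i.1 + 1)] I) ^ (b i)) := by
    rw [hprod]
    exact Ideal.pow_mem_pow hf _
  rw [coeffIdeal]
  exact Submodule.mem_iSup_of_mem ⟨b, le_of_eq hsum.symm⟩ hmem

lemma idealOrdAt_le' {I : Ideal (MvPolynomial (Fin n) k)} {f : MvPolynomial (Fin n) k}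
    (hf : f ∈ I) (h0 : f ≠ 0) : idealOrdAt p I ≤ polyOrdAt p f :=
  Nat.sInf_le ⟨f, hf, h0, rfl⟩

end CIP

open CIP in
theorem idealOrdAt_coeffIdeal {k : Type*} [Field k] [CharZero k] {n : ℕ}
    (I : Ideal (MvPolynomial (Fin n) k)) (hI : I ≠ ⊥) (p : Fin n → k) (a : ℕ)
    (ha : 1 ≤ a) (hord : idealOrdAt p I = a) :
    idealOrdAt p (coeffIdeal I a) = Nat.factorial a := by
  -- a witness of minimal order in I
  obtain ⟨f₁, hf₁I, hf₁0⟩ := (Submodule.ne_bot_iff I).1 hI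
  have hSne : {m | ∃ f ∈ I, f ≠ 0 ∧ polyOrdAt p f = m}.Nonempty :=
    ⟨polyOrdAt p f₁, f₁, hf₁I, hf₁0, rfl⟩
  have hmem := Nat.sInf_mem hSne
  rw [show sInf {m | ∃ f ∈ I, f ≠ 0 ∧ polyOrdAt p f = m} = idealOrdAt p I from rfl, hord] at hmem
  obtain ⟨f, hfI, hf0, hford⟩ := hmem
  -- lower bound predicate for I
  have hIord : IOrdGe p a I := by
    intro g hg
    by_cases hg0 : g = 0
    · rw [hg0, map_zero]; exact ordGe_zero _
    · exact ordGe_of_le_polyOrdAt p (hord ▸ idealOrdAt_le' p hg hg0)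
  have hC : IOrdGe p (Nat.factorial a) (coeffIdeal I a) := IOrdGe_coeffIdeal p ha hIord
  -- the witness in the coefficient ideal
  set N := (a - 1).factorial with hN
  set g := f ^ N with hgdef
  have hgC : g ∈ coeffIdeal I a := pow_mem_coeffIdeal ha hfI
  have hg0 : g ≠ 0 := pow_ne_zero _ hf0
  have hTf : Tp p f ≠ 0 := Tp_ne_zero p hf0
  have horda : ordGe a (Tp p f) := ordGe_of_le_polyOrdAt p (le_of_eq hford.symm)
  obtain ⟨d₀, hd₀, hd₀deg⟩ := exists_deg_eq_polyOrdAt p hTf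
  rw [hford] at hd₀deg
  have hcne := hcomp_ne_zero_of_min hd₀ hd₀deg
  obtain ⟨d, hd, hddeg⟩ := exists_deg_pow hcne horda N
  have hTg : Tp p g = (Tp p f) ^ N := by rw [hgdef, map_pow]
  have hNa : N * a = Nat.factorial a := by
    rw [mul_comm]
    exact Nat.mul_factorial_pred (by omega)
  have hup : polyOrdAt p g ≤ Nat.factorial a := by
    rw [← hNa, ← hddeg]
    exact polyOrdAt_le p (by rw [hTg]; exact hd)
  have hdown : Nat.factorial a ≤ polyOrdAt p g := by
    apply le_polyOrdAt p (Tp_ne_zero p hg0)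
    rw [hTg, ← hNa]
    exact ordGe_pow horda N
  have hgord : polyOrdAt p g = Nat.factorial a := le_antisymm hup hdown
  apply le_antisymm
  · rw [← hgord]
    exact idealOrdAt_le' p hgC hg0
  · rw [idealOrdAt]
    refine le_csInf ⟨polyOrdAt p g, g, hgC, hg0, rfl⟩ ?_
    rintro m ⟨q, hqC, hq0, rfl⟩
    exact le_polyOrdAt p (Tp_ne_zero p hq0) (hC q hqC)
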